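/- Conformality of quaternionic inversion intertwining the induced complex structure with the constant one: let q = q₀ + q₁i + q₂j + q₃k ∈ ℍ with q₁ > 0, and set a = (q₀² + q₁² − q₂² − q₃²)/|q|², b = 2(q₀q₃ + q₁q₂)/|q|², c = 2(q₁q₃ − q₀q₂)/|q|², and I_q = a·i + b·j + c·k (so I_q ∈ 𝕊). Then the inversion map g : ℍ∖{0} → ℍ, g(x) = x⁻¹, is real-differentiable at q and its real Fréchet derivative satisfies (dg)_q(I_q·v) = i·((dg)_q(v)) for every v ∈ ℍ; that is, dg ∘ J^f = J_i ∘ dg at q, where J^f acts by left multiplication by I_q and J_i by left multiplication by i. -/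

import Mathlib

/-- The quaternion imaginary unit `i`. -/
noncomputable def qi : Quaternion ℝ := ⟨0, 1, 0, 0⟩

/-- The quaternion imaginary unit `j`. -/
noncomputable def qj : Quaternion ℝ := ⟨0, 0, 1, 0⟩

/-- The quaternion imaginary unit `k`. -/
noncomputable def qk : Quaternion ℝ := ⟨0, 0, 0, 1⟩

theorem qi_re : qi.re = 0 := rfl

theorem qi_imI : qi.imI = 1 := rfl

theorem qi_imJ : qi.imJ = 0 := rfl

theorem qi_imK : qi.imK = 0 := rfl

theorem qj_re : qj.re = 0 := rfl

theorem qj_imI : qj.imI = 0 := rfl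

theorem qj_imJ : qj.imJ = 1 := rfl

theorem qj_imK : qj.imK = 0 := rfl

theorem qk_re : qk.re = 0 := rfl

theorem qk_imI : qk.imI = 0 := rfl

theorem qk_imJ : qk.imJ = 0 := rfl

theorem qk_imK : qk.imK = 1 := rfl

/- Identify ℍ with `Quaternion ℝ`, components `q = q₀ + q₁i + q₂j + q₃k` and
`|q|² = q₀² + q₁² + q₂² + q₃²`.  The real Fréchet derivative is taken for the
real vector space structure of `ℍ ≅ ℝ⁴`. -/

/-- **Conformality of quaternionic inversion intertwining the induced complex
structure with the constant one**: for `q` with `q₁ > 0` and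
`I_q = a·i + b·j + c·k` as below (`I_q ∈ 𝕊`), the inversion `g(x) = x⁻¹` is
real-differentiable at `q` and `(dg)_q(I_q·v) = i·((dg)_q v)` for every `v`,
i.e. `dg ∘ J^f = J_i ∘ dg` at `q`. -/
theorem inversion_intertwines_complex_structures
    (q : Quaternion ℝ) (hq : 0 < q.imI)
    (a b c : ℝ)
    (ha : a = (q.re ^ 2 + q.imI ^ 2 - q.imJ ^ 2 - q.imK ^ 2)
        / (q.re ^ 2 + q.imI ^ 2 + q.imJ ^ 2 + q.imK ^ 2))
    (hb : b = 2 * (q.re * q.imK + q.imI * q.imJ)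
        / (q.re ^ 2 + q.imI ^ 2 + q.imJ ^ 2 + q.imK ^ 2))
    (hc : c = 2 * (q.imI * q.imK - q.re * q.imJ)
        / (q.re ^ 2 + q.imI ^ 2 + q.imJ ^ 2 + q.imK ^ 2))
    (Iq : Quaternion ℝ) (hIq : Iq = a • qi + b • qj + c • qk) :
    Iq ^ 2 = -1 ∧
    ∃ L : Quaternion ℝ →L[ℝ] Quaternion ℝ,
      HasFDerivAt (fun x : Quaternion ℝ => x⁻¹) L q ∧
      ∀ v : Quaternion ℝ, L (Iq * v) = qi * L v := by
  have hn : (q.re ^ 2 + q.imI ^ 2 + q.imJ ^ 2 + q.imK ^ 2) ≠ 0 := by positivity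
  have hq0 : q ≠ 0 := by
    intro h
    rw [h] at hq
    simp [Quaternion.imI_zero] at hq
  have hqi2 : qi * qi = -1 := by
    ext <;> simp [qi_re, qi_imI, qi_imJ, qi_imK, Quaternion.re_mul, Quaternion.imI_mul, Quaternion.imJ_mul,
      Quaternion.imK_mul, Quaternion.re_one, Quaternion.imI_one, Quaternion.imJ_one,
      Quaternion.imK_one]
  have key : Iq * q = q * qi := by
    subst ha hb hc hIq
    ext <;>
      simp only [qi_re, qi_imI, qi_imJ, qi_imK, qj_re, qj_imI, qj_imJ, qj_imK, qk_re, qk_imI, qk_imJ, qk_imK, Quaternion.re_add, Quaternion.imI_add, Quaternion.imJ_add,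
        Quaternion.imK_add, Quaternion.re_smul, Quaternion.imI_smul, Quaternion.imJ_smul,
        Quaternion.imK_smul, Quaternion.re_mul, Quaternion.imI_mul, Quaternion.imJ_mul,
        Quaternion.imK_mul, smul_eq_mul] <;>
      field_simp <;> ring
  have hconj : q⁻¹ * Iq = qi * q⁻¹ := by
    calc q⁻¹ * Iq = q⁻¹ * (Iq * q * q⁻¹) := by
          rw [mul_assoc (Iq) q q⁻¹, mul_inv_cancel₀ hq0, mul_one]
      _ = q⁻¹ * (q * qi * q⁻¹) := by rw [key]
      _ = qi * q⁻¹ := by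
          rw [mul_assoc, ← mul_assoc q⁻¹ q, inv_mul_cancel₀ hq0, one_mul]
  have hIqeq : Iq = q * qi * q⁻¹ := by
    calc Iq = Iq * q * q⁻¹ := by rw [mul_assoc, mul_inv_cancel₀ hq0, mul_one]
      _ = q * qi * q⁻¹ := by rw [key]
  constructor
  · rw [sq, hIqeq]
    calc q * qi * q⁻¹ * (q * qi * q⁻¹) = q * qi * (q⁻¹ * q) * qi * q⁻¹ := by
          simp [mul_assoc]
      _ = -1 := by
          rw [inv_mul_cancel₀ hq0, mul_one, mul_assoc q qi qi, hqi2]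
          simp [mul_assoc, mul_inv_cancel₀ hq0]
  · refine ⟨-ContinuousLinearMap.mulLeftRight ℝ (Quaternion ℝ) q⁻¹ q⁻¹,
      hasFDerivAt_inv' hq0, fun v => ?_⟩
    simp only [ContinuousLinearMap.neg_apply, ContinuousLinearMap.mulLeftRight_apply,
      mul_neg]
    rw [← mul_assoc, ← mul_assoc, hconj, mul_assoc qi q⁻¹ v]
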